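/- Let 1 ≤ i ≤ m−1 and suppose v_2(i) < v_2(m), where v_2 denotes the 2-adic valuation. Then for F : F_{2^n} → F_{2^n} defined by F(x) = x^{2^m+1} + x^{2^i+1}, the number of a ∈ F_{2^n}, a ≠ 0, for which the component function F_a is bent is not equal to 2^n − 2^m. -/

import Mathlib

open scoped Classical BigOperators

noncomputable section

/-- The finite field with `2^k` elements. -/
abbrev GF (k : ℕ) := GaloisField 2 k

noncomputable instance (k : ℕ) : Fintype (GF k) := Fintype.ofFinite _

/-- The absolute trace `Tr_{2^k/2}`, viewed as an element of `GF k`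
(its values lie in the prime field `{0,1}`). -/
def atr (k : ℕ) (x : GF k) : GF k := ∑ j ∈ Finset.range k, x ^ 2 ^ j

/-- `(-1)^b` for `b ∈ {0,1} ⊆ GF k`. -/
def chi (k : ℕ) (x : GF k) : ℤ := if x = 0 then 1 else -1

/-- The Walsh transform of a Boolean-valued function `f` on `GF k`
(`f` takes values in the prime field `{0,1}`). -/
def walsh (k : ℕ) (f : GF k → GF k) (ω : GF k) : ℤ :=
  ∑ x : GF k, chi k (f x + atr k (ω * x))

/-- The trace `Tr_{2^m/2}` of the subfield `K_m ⊆ GF (2*m)`, viewed inside `GF (2*m)`. -/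
def trKm (m : ℕ) (x : GF (2*m)) : GF (2*m) := ∑ j ∈ Finset.range m, x ^ 2 ^ j

/-- The subfield `K_m = {x : x^(2^m) = x}` of `GF (2*m)`, as a finset. -/
def Km (m : ℕ) : Finset (GF (2*m)) := Finset.univ.filter (fun x => x ^ 2 ^ m = x)

/-- `max_{a ≠ 0, ω} |W_{F_a}(ω)|` for a vectorial function `F` on `GF (2*m)`. -/
def maxAbsW (m : ℕ) (F : GF (2*m) → GF (2*m)) : ℕ :=
  Finset.sup ((Finset.univ.filter (fun a : GF (2*m) => a ≠ 0)) ×ˢ (Finset.univ : Finset (GF (2*m))))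
    (fun p => (walsh (2*m) (fun x => atr (2*m) (p.1 * F x)) p.2).natAbs)

/-- The nonlinearity `N_F = 2^(n-1) - (1/2) max_{a ≠ 0, ω} |W_{F_a}(ω)|`, `n = 2m`. -/
def nlin (m : ℕ) (F : GF (2*m) → GF (2*m)) : ℚ :=
  2 ^ (2*m - 1) - (maxAbsW m F : ℚ) / 2


namespace Aux15

lemma card_GF {k : ℕ} (hk : k ≠ 0) : Fintype.card (GF k) = 2 ^ k := by
  have := GaloisField.card 2 k hk
  rwa [Nat.card_eq_fintype_card] at this

lemma pow_card_GF {k : ℕ} (hk : k ≠ 0) (x : GF k) : x ^ 2 ^ k = x := by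
  have h := FiniteField.pow_card x
  rwa [card_GF hk] at h

lemma pow_red {k : ℕ} (hk : k ≠ 0) (x : GF k) (d : ℕ) : x ^ 2 ^ (k + d) = x ^ 2 ^ d := by
  rw [pow_add, mul_comm, pow_mul, pow_card_GF hk]

lemma htwo (k : ℕ) : (2 : GF k) = 0 := by
  have : (2 : ℕ) ∣ 2 := dvd_rfl
  exact_mod_cast (CharP.cast_eq_zero (GF k) 2)

lemma atr_add {k : ℕ} (x y : GF k) : atr k (x + y) = atr k x + atr k y := by
  unfold atr
  rw [← Finset.sum_add_distrib]
  exact Finset.sum_congr rfl fun j _ => add_pow_char_pow x y 2 j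

lemma atr_zero {k : ℕ} : atr k 0 = 0 := by
  unfold atr
  refine Finset.sum_eq_zero fun j _ => ?_
  exact zero_pow (by positivity)

lemma atr_shift {k : ℕ} (hk : k ≠ 0) (x : GF k) :
    ∑ j ∈ Finset.range k, x ^ 2 ^ (j + 1) = atr k x := by
  obtain ⟨k', rfl⟩ := Nat.exists_eq_succ_of_ne_zero hk
  rw [Finset.sum_range_succ, atr, Finset.sum_range_succ']
  congr 1
  rw [pow_card_GF (Nat.succ_ne_zero k'), pow_zero, pow_one]

lemma atr_sq {k : ℕ} (hk : k ≠ 0) (x : GF k) : atr k x ^ 2 = atr k x := by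
  unfold atr
  rw [sum_pow_char]
  rw [show (∑ j ∈ Finset.range k, (x ^ 2 ^ j) ^ 2) = ∑ j ∈ Finset.range k, x ^ 2 ^ (j+1) by
    refine Finset.sum_congr rfl fun j _ => ?_
    rw [← pow_mul, pow_succ]]
  exact atr_shift hk x

lemma atr_pow_two {k : ℕ} (hk : k ≠ 0) (x : GF k) : atr k (x ^ 2) = atr k x := by
  unfold atr
  rw [show (∑ j ∈ Finset.range k, (x ^ 2) ^ 2 ^ j) = ∑ j ∈ Finset.range k, x ^ 2 ^ (j+1) by
    refine Finset.sum_congr rfl fun j _ => ?_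
    rw [← pow_mul, pow_succ, mul_comm]]
  exact atr_shift hk x

lemma atr_frob {k : ℕ} (hk : k ≠ 0) (x : GF k) (c : ℕ) : atr k (x ^ 2 ^ c) = atr k x := by
  induction c with
  | zero => simp
  | succ c ih =>
      rw [pow_succ, pow_mul, atr_pow_two hk, ih]

lemma atr_bool {k : ℕ} (hk : k ≠ 0) (x : GF k) : atr k x = 0 ∨ atr k x = 1 := by
  have h := atr_sq hk x
  have h2 : atr k x * (atr k x - 1) = 0 := by rw [mul_sub, mul_one, ← sq, h, sub_self]
  rcases mul_eq_zero.mp h2 with h3 | h3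
  · exact Or.inl h3
  · exact Or.inr (by linear_combination h3)

lemma bool_add {k : ℕ} {x y : GF k} (hx : x = 0 ∨ x = 1) (hy : y = 0 ∨ y = 1) :
    x + y = 0 ∨ x + y = 1 := by
  have h2 := htwo k
  rcases hx with rfl | rfl <;> rcases hy with rfl | rfl <;> simp
  linear_combination h2

lemma chi_mul {k : ℕ} {x y : GF k} (hx : x = 0 ∨ x = 1) (hy : y = 0 ∨ y = 1) :
    chi k (x + y) = chi k x * chi k y := by
  have h2 : (1 : GF k) + 1 = 0 := by linear_combination htwo k
  rcases hx with rfl | rfl <;> rcases hy with rfl | rfl <;>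
    simp [chi, h2, one_ne_zero]

lemma exists_atr_ne_zero {k : ℕ} (hk : k ≠ 0) : ∃ y : GF k, atr k y ≠ 0 := by
  by_contra hall
  push_neg at hall
  set p : Polynomial (GF k) := ∑ j ∈ Finset.range k, (Polynomial.X : Polynomial (GF k)) ^ 2 ^ j with hp
  have hdeg : p.natDegree ≤ 2 ^ (k - 1) := by
    refine Polynomial.natDegree_sum_le_of_forall_le _ _ fun j hj => ?_
    rw [Polynomial.natDegree_X_pow]
    have := Finset.mem_range.mp hj
    exact Nat.pow_le_pow_right (by norm_num) (by omega)
  have hne : p ≠ 0 := by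
    intro h0
    have hc : p.coeff (2 ^ (k - 1)) = 1 := by
      rw [hp, Polynomial.finset_sum_coeff]
      rw [show (∑ b ∈ Finset.range k, (Polynomial.X ^ 2 ^ b : Polynomial (GF k)).coeff (2 ^ (k-1)))
            = ∑ b ∈ Finset.range k, if b = k - 1 then (1 : GF k) else 0 by
        refine Finset.sum_congr rfl fun b _ => ?_
        rw [Polynomial.coeff_X_pow]
        congr 1
        simp only [eq_iff_iff]
        constructor
        · intro h; exact (Nat.pow_right_injective (le_refl 2) h).symm
        · intro h; rw [h]]
      rw [Finset.sum_ite_eq' (Finset.range k) (k-1)]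
      simp [Finset.mem_range]
      omega
    rw [h0] at hc
    simp at hc
  have hroots : (Finset.univ : Finset (GF k)) ⊆ p.roots.toFinset := by
    intro y _
    rw [Multiset.mem_toFinset, Polynomial.mem_roots hne]
    show p.eval y = 0
    rw [hp]
    rw [Polynomial.eval_finset_sum]
    simpa [atr] using hall y
  have h1 : 2 ^ k ≤ 2 ^ (k - 1) := by
    calc 2 ^ k = Fintype.card (GF k) := (card_GF hk).symm
    _ = (Finset.univ : Finset (GF k)).card := (Finset.card_univ).symm
    _ ≤ p.roots.toFinset.card := Finset.card_le_card hroots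
    _ ≤ Multiset.card p.roots := Multiset.toFinset_card_le _
    _ ≤ p.natDegree := Polynomial.card_roots' p
    _ ≤ 2 ^ (k - 1) := hdeg
  have h2 : 2 ^ (k - 1) < 2 ^ k := Nat.pow_lt_pow_right (by norm_num) (by omega)
  omega

end Aux15

namespace Aux15

lemma sum_chi_zero {k : ℕ} (hk : k ≠ 0) (h : GF k → GF k) (h0 : ∀ x, h x = 0) :
    ∑ x : GF k, chi k (h x) = 2 ^ k := by
  have : ∀ x : GF k, chi k (h x) = 1 := fun x => by rw [h0 x]; simp [chi]
  rw [Finset.sum_congr rfl fun x _ => this x, Finset.sum_const, Finset.card_univ, card_GF hk]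
  simp

lemma sum_chi_cancel {k : ℕ} (h : GF k → GF k)
    (hadd : ∀ x y, h (x + y) = h x + h y) (hb : ∀ x, h x = 0 ∨ h x = 1)
    (hex : ∃ x₀, h x₀ ≠ 0) :
    ∑ x : GF k, chi k (h x) = 0 := by
  obtain ⟨x₀, hx₀⟩ := hex
  have h1 : h x₀ = 1 := (hb x₀).resolve_left hx₀
  have key : ∑ x : GF k, chi k (h x) = ∑ x : GF k, chi k (h (x + x₀)) := by
    exact Fintype.sum_equiv (Equiv.addRight x₀) _ _ (fun x => rfl) |>.symm
  have key2 : ∀ x : GF k, chi k (h (x + x₀)) = - chi k (h x) := by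
    intro x
    rw [hadd, chi_mul (hb x) (h1 ▸ hb x₀), h1]
    simp [chi, one_ne_zero]
  rw [Finset.sum_congr rfl fun x _ => key2 x, Finset.sum_neg_distrib] at key
  linarith

lemma sum_chi_linear {k : ℕ} (hk : k ≠ 0) (c : GF k) :
    ∑ x : GF k, chi k (atr k (c * x)) = if c = 0 then 2 ^ k else 0 := by
  split_ifs with hc
  · exact sum_chi_zero hk _ fun x => by rw [hc, zero_mul, atr_zero]
  · refine sum_chi_cancel _ (fun x y => by rw [mul_add, atr_add])
      (fun x => atr_bool hk _) ?_
    obtain ⟨y, hy⟩ := exists_atr_ne_zero hk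
    exact ⟨c⁻¹ * y, by rwa [← mul_assoc, mul_inv_cancel₀ hc, one_mul]⟩

lemma sum_chi_dichotomy {k : ℕ} (hk : k ≠ 0) (h : GF k → GF k)
    (hadd : ∀ x y, h (x + y) = h x + h y) (hb : ∀ x, h x = 0 ∨ h x = 1) :
    ∑ x : GF k, chi k (h x) = if (∀ x, h x = 0) then 2 ^ k else 0 := by
  split_ifs with hall
  · exact sum_chi_zero hk h hall
  · push_neg at hall
    exact sum_chi_cancel h hadd hb hall

end Aux15

namespace Aux15

def Bf (m i : ℕ) (s t : GF (2*m)) : GF (2*m) :=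
  s ^ 2 ^ m * t + s * t ^ 2 ^ m + s ^ 2 ^ i * t + s * t ^ 2 ^ i

def kk (m i : ℕ) (a : GF (2*m)) : ℕ :=
  (Finset.univ.filter (fun s : GF (2*m) => ∀ t, atr (2*m) (a * Bf m i s t) = 0)).card

variable {m i : ℕ}

lemma Bf_add_right (s t t' : GF (2*m)) :
    Bf m i s (t + t') = Bf m i s t + Bf m i s t' := by
  unfold Bf
  rw [add_pow_char_pow t t' 2 m, add_pow_char_pow t t' 2 i]
  ring

lemma Bf_zero_left (t : GF (2*m)) : Bf m i 0 t = 0 := by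
  unfold Bf
  rw [zero_pow (by positivity), zero_pow (by positivity)]
  ring

lemma Bf_zero_right (s : GF (2*m)) : Bf m i s 0 = 0 := by
  unfold Bf
  rw [zero_pow (by positivity), zero_pow (by positivity)]
  ring

lemma Bf_diag (s : GF (2*m)) : Bf m i s s = 0 := by
  unfold Bf
  linear_combination (s ^ 2 ^ m * s + s ^ 2 ^ i * s) * htwo (2*m)

lemma quad (c : ℕ) (x s t : GF (2*m)) :
    x ^ (2^c+1) + (x+s) ^ (2^c+1) + (x+t) ^ (2^c+1) + (x+s+t) ^ (2^c+1)
      = s ^ 2^c * t + s * t ^ 2^c := by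
  have h1 : (x+s)^(2^c) = x^(2^c)+s^(2^c) := add_pow_char_pow x s 2 c
  have h2 : (x+t)^(2^c) = x^(2^c)+t^(2^c) := add_pow_char_pow x t 2 c
  have h3 : (x+s+t)^(2^c) = x^(2^c)+s^(2^c)+t^(2^c) := by
    rw [add_pow_char_pow (x+s) t 2 c, add_pow_char_pow x s 2 c]
  have e : ∀ y : GF (2*m), y ^ (2^c+1) = y ^ (2^c) * y := fun y => by rw [pow_succ]
  rw [e, e, e, e, h1, h2, h3]
  linear_combination (2*(x^(2^c)*x) + x^(2^c)*s + s^(2^c)*x + s^(2^c)*s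
    + x^(2^c)*t + t^(2^c)*x + t^(2^c)*t) * htwo (2*m)

lemma core (a x s t : GF (2*m)) :
    atr (2*m) (a * (x ^ (2^m+1) + x ^ (2^i+1)))
      + atr (2*m) (a * ((x+s) ^ (2^m+1) + (x+s) ^ (2^i+1)))
      + atr (2*m) (a * ((x+t) ^ (2^m+1) + (x+t) ^ (2^i+1)))
      + atr (2*m) (a * ((x+s+t) ^ (2^m+1) + (x+s+t) ^ (2^i+1)))
      = atr (2*m) (a * Bf m i s t) := by
  rw [← atr_add, ← atr_add, ← atr_add]
  congr 1
  have hm' := quad (m := m) m x s t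
  have hi' := quad (m := m) i x s t
  unfold Bf
  linear_combination a * hm' + a * hi'

end Aux15

namespace Aux15

variable {m i : ℕ}

set_option maxHeartbeats 2000000 in
lemma moment4 (hm : m ≠ 0) (a : GF (2*m)) :
    ∑ ω : GF (2*m),
        (walsh (2*m) (fun x => atr (2*m) (a * (x ^ (2^m+1) + x ^ (2^i+1)))) ω) ^ 4
      = ((2:ℤ) ^ (2*m)) ^ 3 * (kk m i a : ℤ) := by
  have hk : 2*m ≠ 0 := by omega
  set g : GF (2*m) → GF (2*m) := fun x => atr (2*m) (a * (x ^ (2^m+1) + x ^ (2^i+1))) with hg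
  set q : GF (2*m) → GF (2*m) → ℤ := fun ω x => chi (2*m) (g x + atr (2*m) (ω * x)) with hq
  have hb : ∀ x, g x = 0 ∨ g x = 1 := fun x => atr_bool hk _
  -- step 1 : expand the fourth power
  have h4 : ∀ ω : GF (2*m), (walsh (2*m) g ω)^4
      = ∑ x : GF (2*m), ∑ z : GF (2*m), ∑ y : GF (2*m), ∑ w : GF (2*m),
          (q ω x * q ω y) * (q ω z * q ω w) := by
    intro ω
    have hW : walsh (2*m) g ω = ∑ x : GF (2*m), q ω x := rfl
    calc (walsh (2*m) g ω)^4
        = ((∑ x : GF (2*m), q ω x) * (∑ y : GF (2*m), q ω y))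
            * ((∑ z : GF (2*m), q ω z) * (∑ w : GF (2*m), q ω w)) := by rw [hW]; ring
      _ = (∑ x : GF (2*m), ∑ y : GF (2*m), q ω x * q ω y)
            * (∑ z : GF (2*m), ∑ w : GF (2*m), q ω z * q ω w) := by
            rw [Finset.sum_mul_sum, Finset.sum_mul_sum]
      _ = ∑ x : GF (2*m), ∑ z : GF (2*m),
            (∑ y : GF (2*m), q ω x * q ω y) * (∑ w : GF (2*m), q ω z * q ω w) := by
            rw [Finset.sum_mul_sum]
      _ = _ := by
            refine Finset.sum_congr rfl fun x _ => Finset.sum_congr rfl fun z _ => ?_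
            rw [Finset.sum_mul_sum]
  -- step 2 : combine the chi's
  have hsummand : ∀ (ω x y z w : GF (2*m)),
      (q ω x * q ω y) * (q ω z * q ω w)
        = chi (2*m) (g x + g y + g z + g w) * chi (2*m) (atr (2*m) (ω * (x+y+z+w))) := by
    intro ω x y z w
    have bx := bool_add (hb x) (atr_bool hk (ω * x))
    have by' := bool_add (hb y) (atr_bool hk (ω * y))
    have bz := bool_add (hb z) (atr_bool hk (ω * z))
    have bw := bool_add (hb w) (atr_bool hk (ω * w))
    have hGb : g x + g y + g z + g w = 0 ∨ g x + g y + g z + g w = 1 :=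
      bool_add (bool_add (bool_add (hb x) (hb y)) (hb z)) (hb w)
    have hatr4 : atr (2*m) (ω*x) + atr (2*m) (ω*y) + atr (2*m) (ω*z) + atr (2*m) (ω*w)
        = atr (2*m) (ω * (x+y+z+w)) := by
      rw [← atr_add, ← atr_add, ← atr_add]
      congr 1
      ring
    show (chi (2*m) (g x + atr (2*m) (ω*x)) * chi (2*m) (g y + atr (2*m) (ω*y)))
        * (chi (2*m) (g z + atr (2*m) (ω*z)) * chi (2*m) (g w + atr (2*m) (ω*w))) = _
    rw [← chi_mul bx by', ← chi_mul bz bw, ← chi_mul (bool_add bx by') (bool_add bz bw),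
        ← chi_mul hGb (atr_bool hk (ω * (x+y+z+w)))]
    congr 1
    linear_combination hatr4
  -- step 3 : sum over ω and collapse
  calc ∑ ω : GF (2*m), (walsh (2*m) g ω)^4
      = ∑ ω : GF (2*m), ∑ x : GF (2*m), ∑ z : GF (2*m), ∑ y : GF (2*m), ∑ w : GF (2*m),
          chi (2*m) (g x + g y + g z + g w) * chi (2*m) (atr (2*m) (ω * (x+y+z+w))) := by
        refine Finset.sum_congr rfl fun ω _ => ?_
        rw [h4 ω]
        exact Finset.sum_congr rfl fun x _ => Finset.sum_congr rfl fun z _ =>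
          Finset.sum_congr rfl fun y _ => Finset.sum_congr rfl fun w _ => hsummand ω x y z w
    _ = ∑ x : GF (2*m), ∑ z : GF (2*m), ∑ y : GF (2*m), ∑ w : GF (2*m),
          chi (2*m) (g x + g y + g z + g w)
            * (∑ ω : GF (2*m), chi (2*m) (atr (2*m) ((x+y+z+w) * ω))) := by
        rw [Finset.sum_comm]
        refine Finset.sum_congr rfl fun x _ => ?_
        rw [Finset.sum_comm]
        refine Finset.sum_congr rfl fun z _ => ?_
        rw [Finset.sum_comm]
        refine Finset.sum_congr rfl fun y _ => ?_
        rw [Finset.sum_comm]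
        refine Finset.sum_congr rfl fun w _ => ?_
        rw [Finset.mul_sum]
        exact Finset.sum_congr rfl fun ω _ => by rw [mul_comm (x+y+z+w) ω]
    _ = ∑ x : GF (2*m), ∑ z : GF (2*m), ∑ y : GF (2*m),
          chi (2*m) (g x + g y + g z + g (x+y+z)) * 2^(2*m) := by
        refine Finset.sum_congr rfl fun x _ => Finset.sum_congr rfl fun z _ =>
          Finset.sum_congr rfl fun y _ => ?_
        rw [show (∑ w : GF (2*m), chi (2*m) (g x + g y + g z + g w)
              * (∑ ω : GF (2*m), chi (2*m) (atr (2*m) ((x+y+z+w) * ω))))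
            = ∑ w : GF (2*m), if w = x+y+z then chi (2*m) (g x + g y + g z + g w) * 2^(2*m) else 0 from
          Finset.sum_congr rfl fun w _ => by
            rw [sum_chi_linear hk (x+y+z+w), mul_ite, mul_zero]
            congr 1
            simp only [eq_iff_iff]
            constructor
            · intro h; linear_combination h - (x+y+z) * htwo (2*m)
            · intro h; linear_combination h + (x+y+z) * htwo (2*m)]
        rw [Finset.sum_ite_eq' Finset.univ (x+y+z)
          (fun w => chi (2*m) (g x + g y + g z + g w) * 2^(2*m))]
        simp
    _ = ∑ x : GF (2*m), ∑ t : GF (2*m), ∑ s : GF (2*m),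
          chi (2*m) (atr (2*m) (a * Bf m i s t)) * 2^(2*m) := by
        refine Finset.sum_congr rfl fun x _ => ?_
        rw [← Fintype.sum_equiv (Equiv.addLeft x)
          (fun t => ∑ y : GF (2*m), chi (2*m) (g x + g y + g (x+t) + g (x+y+(x+t))) * 2^(2*m))
          (fun z => ∑ y : GF (2*m), chi (2*m) (g x + g y + g z + g (x+y+z)) * 2^(2*m))
          (fun t => rfl)]
        refine Finset.sum_congr rfl fun t _ => ?_
        rw [← Fintype.sum_equiv (Equiv.addLeft x)
          (fun s => chi (2*m) (g x + g (x+s) + g (x+t) + g (x+(x+s)+(x+t))) * 2^(2*m))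
          (fun y => chi (2*m) (g x + g y + g (x+t) + g (x+y+(x+t))) * 2^(2*m))
          (fun s => rfl)]
        refine Finset.sum_congr rfl fun s _ => ?_
        congr 2
        have harg : x+(x+s)+(x+t) = x+s+t := by linear_combination x * htwo (2*m)
        rw [harg, hg]
        exact core a x s t
    _ = ((2:ℤ) ^ (2*m)) ^ 3 * (kk m i a : ℤ) := by
        have hinner : ∀ s : GF (2*m),
            (∑ t : GF (2*m), chi (2*m) (atr (2*m) (a * Bf m i s t)))
              = if (∀ t, atr (2*m) (a * Bf m i s t) = 0) then 2^(2*m) else 0 := fun s =>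
          sum_chi_dichotomy hk _
            (fun t t' => by rw [Bf_add_right, mul_add, atr_add]) (fun t => atr_bool hk _)
        have hD : (∑ s : GF (2*m), ∑ t : GF (2*m), chi (2*m) (atr (2*m) (a * Bf m i s t)))
            = (kk m i a : ℤ) * 2^(2*m) := by
          rw [Finset.sum_congr rfl fun s (_ : s ∈ Finset.univ) => hinner s]
          rw [Finset.sum_ite, Finset.sum_const, Finset.sum_const_zero, add_zero, nsmul_eq_mul]
          rfl
        have hC : (∑ t : GF (2*m), ∑ s : GF (2*m),
              chi (2*m) (atr (2*m) (a * Bf m i s t)) * 2^(2*m))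
            = ((kk m i a : ℤ) * 2^(2*m)) * 2^(2*m) := by
          calc (∑ t : GF (2*m), ∑ s : GF (2*m),
                chi (2*m) (atr (2*m) (a * Bf m i s t)) * 2^(2*m))
              = (∑ t : GF (2*m), (∑ s : GF (2*m),
                  chi (2*m) (atr (2*m) (a * Bf m i s t))) * 2^(2*m)) :=
                Finset.sum_congr rfl fun t _ => (Finset.sum_mul _ _ _).symm
            _ = (∑ t : GF (2*m), ∑ s : GF (2*m),
                  chi (2*m) (atr (2*m) (a * Bf m i s t))) * 2^(2*m) :=
                (Finset.sum_mul _ _ _).symm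
            _ = (∑ s : GF (2*m), ∑ t : GF (2*m),
                  chi (2*m) (atr (2*m) (a * Bf m i s t))) * 2^(2*m) := by
                rw [Finset.sum_comm]
            _ = ((kk m i a : ℤ) * 2^(2*m)) * 2^(2*m) := by rw [hD]
        rw [Finset.sum_congr rfl fun (x : GF (2*m)) (_ : x ∈ Finset.univ) => hC,
          Finset.sum_const, Finset.card_univ, card_GF hk, nsmul_eq_mul]
        push_cast
        ring

end Aux15

namespace Aux15

variable {m i : ℕ}

def KK (m i : ℕ) : ℕ :=
  ∑ s : GF (2*m), (Finset.univ.filter (fun t : GF (2*m) => Bf m i s t = 0)).card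

lemma hDlem (hm : m ≠ 0) (a : GF (2*m)) :
    (∑ s : GF (2*m), ∑ t : GF (2*m), chi (2*m) (atr (2*m) (a * Bf m i s t)))
      = (kk m i a : ℤ) * 2^(2*m) := by
  have hk : 2*m ≠ 0 := by omega
  have hinner : ∀ s : GF (2*m),
      (∑ t : GF (2*m), chi (2*m) (atr (2*m) (a * Bf m i s t)))
        = if (∀ t, atr (2*m) (a * Bf m i s t) = 0) then 2^(2*m) else 0 := fun s =>
    sum_chi_dichotomy hk _
      (fun t t' => by rw [Bf_add_right, mul_add, atr_add]) (fun t => atr_bool hk _)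
  rw [Finset.sum_congr rfl fun s (_ : s ∈ Finset.univ) => hinner s]
  rw [Finset.sum_ite, Finset.sum_const, Finset.sum_const_zero, add_zero, nsmul_eq_mul]
  rfl

lemma kk_eq_one (hm : m ≠ 0) (a : GF (2*m))
    (hW : ∀ ω, (walsh (2*m) (fun x => atr (2*m) (a * (x ^ (2^m+1) + x ^ (2^i+1)))) ω)^2
      = 2^(2*m)) :
    kk m i a = 1 := by
  have hk : 2*m ≠ 0 := by omega
  have h4 := moment4 (i := i) hm a
  have h5 : ∑ ω : GF (2*m),
      (walsh (2*m) (fun x => atr (2*m) (a * (x ^ (2^m+1) + x ^ (2^i+1)))) ω) ^ 4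
      = ((2:ℤ) ^ (2*m)) ^ 3 := by
    have : ∀ ω : GF (2*m),
        (walsh (2*m) (fun x => atr (2*m) (a * (x ^ (2^m+1) + x ^ (2^i+1)))) ω) ^ 4
          = ((2:ℤ)^(2*m))^2 := by
      intro ω
      have := hW ω
      nlinarith [this]
    rw [Finset.sum_congr rfl fun ω (_ : ω ∈ Finset.univ) => this ω, Finset.sum_const,
      Finset.card_univ, card_GF hk, nsmul_eq_mul]
    push_cast
    ring
  rw [h5] at h4
  have hne : ((2:ℤ) ^ (2*m)) ^ 3 ≠ 0 := by positivity
  have : (kk m i a : ℤ) = 1 := by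
    have := h4.symm
    replace this := mul_left_cancel₀ hne (this.trans (mul_one _).symm)
    linarith [this]
  exact_mod_cast this

lemma sum_kk (hm : m ≠ 0) : ∑ a : GF (2*m), kk m i a = KK m i := by
  have hk : 2*m ≠ 0 := by omega
  have way1 : (∑ a : GF (2*m), ∑ s : GF (2*m), ∑ t : GF (2*m),
      chi (2*m) (atr (2*m) (a * Bf m i s t)))
      = (∑ a : GF (2*m), (kk m i a : ℤ)) * 2^(2*m) := by
    rw [Finset.sum_mul]
    exact Finset.sum_congr rfl fun a _ => hDlem hm a
  have way2 : (∑ a : GF (2*m), ∑ s : GF (2*m), ∑ t : GF (2*m),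
      chi (2*m) (atr (2*m) (a * Bf m i s t)))
      = (KK m i : ℤ) * 2^(2*m) := by
    rw [Finset.sum_comm]
    calc (∑ s : GF (2*m), ∑ a : GF (2*m), ∑ t : GF (2*m),
          chi (2*m) (atr (2*m) (a * Bf m i s t)))
        = ∑ s : GF (2*m), ∑ t : GF (2*m), ∑ a : GF (2*m),
            chi (2*m) (atr (2*m) (Bf m i s t * a)) := by
          refine Finset.sum_congr rfl fun s _ => ?_
          rw [Finset.sum_comm]
          exact Finset.sum_congr rfl fun t _ => Finset.sum_congr rfl fun a _ => by
            rw [mul_comm a]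
      _ = ∑ s : GF (2*m), ∑ t : GF (2*m),
            (if Bf m i s t = 0 then (2:ℤ)^(2*m) else 0) := by
          exact Finset.sum_congr rfl fun s _ => Finset.sum_congr rfl fun t _ =>
            sum_chi_linear hk _
      _ = ∑ s : GF (2*m),
            ((Finset.univ.filter (fun t : GF (2*m) => Bf m i s t = 0)).card : ℤ) * 2^(2*m) := by
          refine Finset.sum_congr rfl fun s _ => ?_
          rw [Finset.sum_ite, Finset.sum_const, Finset.sum_const_zero, add_zero, nsmul_eq_mul]
      _ = (KK m i : ℤ) * 2^(2*m) := by
          rw [← Finset.sum_mul]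
          congr 1
          rw [KK]
          push_cast
          rfl
  have h := way1.symm.trans way2
  have h2 : (∑ a : GF (2*m), (kk m i a : ℤ)) = (KK m i : ℤ) :=
    mul_right_cancel₀ (by positivity) h
  have : ((∑ a : GF (2*m), kk m i a : ℕ) : ℤ) = (KK m i : ℤ) := by
    push_cast
    exact h2
  exact_mod_cast this

lemma KK_lower (hm : m ≠ 0) : 3 * 2^(2*m) - 2 ≤ KK m i := by
  have hk : 2*m ≠ 0 := by omega
  have h0 : (Finset.univ.filter (fun t : GF (2*m) => Bf m i 0 t = 0)).card = 2^(2*m) := by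
    rw [Finset.filter_true_of_mem (fun t _ => Bf_zero_left t), Finset.card_univ, card_GF hk]
  have hs : ∀ s : GF (2*m), s ≠ 0 →
      2 ≤ (Finset.univ.filter (fun t : GF (2*m) => Bf m i s t = 0)).card := by
    intro s hsne
    have hsub : ({0, s} : Finset (GF (2*m))) ⊆
        Finset.univ.filter (fun t : GF (2*m) => Bf m i s t = 0) := by
      intro t ht
      rcases Finset.mem_insert.mp ht with rfl | ht'
      · exact Finset.mem_filter.mpr ⟨Finset.mem_univ _, Bf_zero_right s⟩
      · rw [Finset.mem_singleton.mp ht']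
        exact Finset.mem_filter.mpr ⟨Finset.mem_univ _, Bf_diag s⟩
    calc 2 = ({0, s} : Finset (GF (2*m))).card := (Finset.card_pair (Ne.symm hsne)).symm
      _ ≤ _ := Finset.card_le_card hsub
  have hsplit : KK m i = (Finset.univ.filter (fun t : GF (2*m) => Bf m i 0 t = 0)).card
      + ∑ s ∈ Finset.univ.erase (0 : GF (2*m)),
          (Finset.univ.filter (fun t : GF (2*m) => Bf m i s t = 0)).card := by
    rw [KK, ← Finset.add_sum_erase _ _ (Finset.mem_univ (0 : GF (2*m)))]
  have herase : (Finset.univ.erase (0 : GF (2*m))).card = 2^(2*m) - 1 := by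
    rw [Finset.card_erase_of_mem (Finset.mem_univ _), Finset.card_univ, card_GF hk]
  have hge : (2^(2*m) - 1) * 2 ≤ ∑ s ∈ Finset.univ.erase (0 : GF (2*m)),
      (Finset.univ.filter (fun t : GF (2*m) => Bf m i s t = 0)).card := by
    calc (2^(2*m) - 1) * 2 = ∑ _s ∈ Finset.univ.erase (0 : GF (2*m)), 2 := by
          rw [Finset.sum_const, herase, smul_eq_mul]
      _ ≤ _ := Finset.sum_le_sum fun s hs' =>
          hs s (Finset.ne_of_mem_erase hs')
  have hpow : 1 ≤ 2^(2*m) := Nat.one_le_two_pow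
  omega

lemma kk_zero (hm : m ≠ 0) : kk m i (0 : GF (2*m)) = 2^(2*m) := by
  have hk : 2*m ≠ 0 := by omega
  rw [kk, Finset.filter_true_of_mem, Finset.card_univ, card_GF hk]
  intro s _
  intro t
  rw [zero_mul, atr_zero]

end Aux15

namespace Aux15

open Polynomial

variable {m i j : ℕ}

lemma pp {k : ℕ} (x : GF k) (b c : ℕ) : (x ^ 2^b) ^ 2^c = x ^ 2^(b+c) := by
  rw [← pow_mul, ← pow_add]

def Lam (m i j : ℕ) (a s : GF (2*m)) : GF (2*m) :=
  (a + a^(2^m)) * s^(2^m) + a^(2^(m+j)) * s^(2^(m+j)) + a * s^(2^i)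

lemma atr_Bf_eq (hm : m ≠ 0) (hij : i + j = m) (a s t : GF (2*m)) :
    atr (2*m) (a * Bf m i s t) = atr (2*m) (t * Lam m i j a s) := by
  have hk : 2*m ≠ 0 := by omega
  have e1 : a * Bf m i s t
      = a * (s^(2^m) * t) + a * (s * t^(2^m)) + a * (s^(2^i) * t) + a * (s * t^(2^i)) := by
    unfold Bf; ring
  have h2 : atr (2*m) (a * (s * t^(2^m))) = atr (2*m) (a^(2^m) * s^(2^m) * t) := by
    have harg : a^(2^m) * s^(2^m) * t = (a * (s * t^(2^m)))^(2^m) := by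
      rw [mul_pow, mul_pow, pp t m m, show m + m = 2*m by ring, pow_card_GF hk t]
      ring
    rw [harg, atr_frob hk]
  have h4 : atr (2*m) (a * (s * t^(2^i))) = atr (2*m) (a^(2^(m+j)) * s^(2^(m+j)) * t) := by
    have harg : a^(2^(m+j)) * s^(2^(m+j)) * t = (a * (s * t^(2^i)))^(2^(m+j)) := by
      rw [mul_pow, mul_pow, pp t i (m+j), show i + (m+j) = 2*m by omega, pow_card_GF hk t]
      ring
    rw [harg, atr_frob hk]
  rw [e1, atr_add, atr_add, atr_add, h2, h4]
  rw [show t * Lam m i j a s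
      = (a * (s^(2^m) * t) + a^(2^m) * s^(2^m) * t)
        + (a * (s^(2^i) * t) + a^(2^(m+j)) * s^(2^(m+j)) * t) by unfold Lam; ring]
  rw [atr_add, atr_add, atr_add]
  ring

lemma kk_eq_Lam (hm : m ≠ 0) (hij : i + j = m) (a : GF (2*m)) :
    kk m i a = (Finset.univ.filter (fun s : GF (2*m) => Lam m i j a s = 0)).card := by
  have hk : 2*m ≠ 0 := by omega
  unfold kk
  congr 1
  apply Finset.filter_congr
  intro s _
  constructor
  · intro hall
    by_contra hne
    obtain ⟨y, hy⟩ := exists_atr_ne_zero hk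
    have := hall (y * (Lam m i j a s)⁻¹)
    rw [atr_Bf_eq hm hij, mul_assoc, inv_mul_cancel₀ hne, mul_one] at this
    exact hy this
  · intro h0 t
    rw [atr_Bf_eq hm hij, h0, mul_zero, atr_zero]

lemma card_roots_le {k : ℕ} (hk : k ≠ 0) (p : Polynomial (GF k)) (hp : p ≠ 0) :
    (Finset.univ.filter (fun s : GF k => p.eval s = 0)).card ≤ p.natDegree := by
  calc (Finset.univ.filter (fun s : GF k => p.eval s = 0)).card
      ≤ p.roots.toFinset.card := by
        apply Finset.card_le_card
        intro s hs
        rw [Multiset.mem_toFinset, Polynomial.mem_roots hp]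
        exact (Finset.mem_filter.mp hs).2
    _ ≤ Multiset.card p.roots := Multiset.toFinset_card_le _
    _ ≤ p.natDegree := Polynomial.card_roots' p

lemma kk_le_case1 (hm : m ≠ 0) (hij : i + j = m) (hj : j ≠ 0) (hcase : 2*j ≤ m)
    {a : GF (2*m)} (ha : a ≠ 0) : kk m i a ≤ 2^m := by
  have hk : 2*m ≠ 0 := by omega
  set q : Polynomial (GF (2*m)) :=
    Polynomial.C (a^(2^(2*j))) * Polynomial.X^(2^(2*j))
    + Polynomial.C ((a+a^(2^m))^(2^(m+j))) * Polynomial.X^(2^j)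
    + Polynomial.C (a^(2^(m+j))) * Polynomial.X with hq
  have heval : ∀ s : GF (2*m), q.eval s = (Lam m i j a s)^(2^(m+j)) := by
    intro s
    rw [Lam, add_pow_char_pow _ _ 2 (m+j), add_pow_char_pow _ _ 2 (m+j)]
    rw [mul_pow, mul_pow, mul_pow]
    rw [pp s m (m+j), show m + (m+j) = 2*m + j by omega, pow_red hk s j]
    rw [pp a (m+j) (m+j), show (m+j) + (m+j) = 2*m + 2*j by omega, pow_red hk a (2*j)]
    rw [pp s (m+j) (m+j), show (m+j) + (m+j) = 2*m + 2*j by omega, pow_red hk s (2*j)]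
    rw [pp s i (m+j), show i + (m+j) = 2*m by omega, pow_card_GF hk s]
    simp only [hq, Polynomial.eval_add, Polynomial.eval_mul, Polynomial.eval_C,
      Polynomial.eval_pow, Polynomial.eval_X]
    ring
  have hfilter : (Finset.univ.filter (fun s : GF (2*m) => Lam m i j a s = 0))
      = (Finset.univ.filter (fun s : GF (2*m) => q.eval s = 0)) := by
    apply Finset.filter_congr
    intro s _
    rw [heval s]
    constructor
    · intro h; rw [h]; exact zero_pow (by positivity)
    · intro h; exact pow_eq_zero_iff (by positivity) |>.mp h
  have hqne : q ≠ 0 := by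
    intro h0
    have hc : q.coeff (2^(2*j)) = a^(2^(2*j)) := by
      rw [hq]
      rw [Polynomial.coeff_add, Polynomial.coeff_add]
      rw [Polynomial.coeff_C_mul, Polynomial.coeff_C_mul, Polynomial.coeff_C_mul]
      rw [Polynomial.coeff_X_pow, Polynomial.coeff_X_pow, Polynomial.coeff_X]
      have h1 : ¬ (2^(2*j) = 2^j) := by
        intro h
        have := Nat.pow_right_injective (le_refl 2) h
        omega
      have h2 : ¬ ((1:ℕ) = 2^(2*j)) := by
        have : (2:ℕ)^1 ≤ 2^(2*j) := Nat.pow_le_pow_right (by norm_num) (by omega)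
        omega
      simp [h1, h2]
    rw [h0] at hc
    simp at hc
    exact ha (pow_eq_zero_iff (by positivity) |>.mp hc.symm)
  have hdeg : q.natDegree ≤ 2^(2*j) := by
    rw [hq]
    refine le_trans (Polynomial.natDegree_add_le _ _) ?_
    rw [max_le_iff]
    constructor
    · refine le_trans (Polynomial.natDegree_add_le _ _) ?_
      rw [max_le_iff]
      constructor
      · exact le_trans (Polynomial.natDegree_C_mul_le _ _)
          (by rw [Polynomial.natDegree_X_pow])
      · refine le_trans (Polynomial.natDegree_C_mul_le _ _) ?_
        rw [Polynomial.natDegree_X_pow]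
        exact Nat.pow_le_pow_right (by norm_num) (by omega)
    · refine le_trans (Polynomial.natDegree_C_mul_le _ _) ?_
      refine le_trans (Polynomial.natDegree_X_le) ?_
      have : (2:ℕ)^1 ≤ 2^(2*j) := Nat.pow_le_pow_right (by norm_num) (by omega)
      omega
  calc kk m i a
      = (Finset.univ.filter (fun s : GF (2*m) => Lam m i j a s = 0)).card :=
        kk_eq_Lam hm hij a
    _ = (Finset.univ.filter (fun s : GF (2*m) => q.eval s = 0)).card := by rw [hfilter]
    _ ≤ q.natDegree := card_roots_le hk q hqne
    _ ≤ 2^(2*j) := hdeg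
    _ ≤ 2^m := Nat.pow_le_pow_right (by norm_num) hcase

end Aux15

namespace Aux15

open Polynomial

variable {m i j : ℕ}

lemma kk_le_case2 (hm : m ≠ 0) (hi1 : 1 ≤ i) (hij : i + j = m) (h3 : m ≠ 3*i)
    (hcase : 2*i < m) {a : GF (2*m)} (ha : a ≠ 0) : kk m i a ≤ 2^m := by
  have hk : 2*m ≠ 0 := by omega
  have hj : j ≠ 0 := by omega
  set A : GF (2*m) := a + a^(2^m) with hA
  set g : Polynomial (GF (2*m)) :=
    Polynomial.C (A^(2^i) * a^(2^j)) * Polynomial.X^(2^j)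
    + Polynomial.C (a^(2^m) * a^(2^i)) * Polynomial.X^(2^(2*i))
    + Polynomial.C (A^(2^i)*A + a^(2^m)*a) * Polynomial.X with hg
  have hApow : A^(2^m) = A := by
    rw [hA, add_pow_char_pow _ _ 2 m, pp a m m, show m + m = 2*m by ring, pow_card_GF hk a]
    ring
  have heval : ∀ s : GF (2*m),
      g.eval s = A^(2^i) * (Lam m i j a s)^(2^m) + a^(2^m) * (Lam m i j a s)^(2^i) := by
    intro s
    have hLm : (Lam m i j a s)^(2^m) = A * s + a^(2^j) * s^(2^j) + a^(2^m) * s^(2^(m+i)) := by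
      rw [Lam, add_pow_char_pow _ _ 2 m, add_pow_char_pow _ _ 2 m]
      rw [mul_pow, mul_pow, mul_pow]
      rw [pp s m m, show m + m = 2*m by ring, pow_card_GF hk s]
      rw [pp a (m+j) m, show (m+j) + m = 2*m + j by omega, pow_red hk a j]
      rw [pp s (m+j) m, show (m+j) + m = 2*m + j by omega, pow_red hk s j]
      rw [pp s i m, ← hA, hApow]
      ring_nf
    have hLi : (Lam m i j a s)^(2^i)
        = A^(2^i) * s^(2^(m+i)) + a * s + a^(2^i) * s^(2^(2*i)) := by
      rw [Lam, add_pow_char_pow _ _ 2 i, add_pow_char_pow _ _ 2 i]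
      rw [mul_pow, mul_pow, mul_pow]
      rw [pp s m i]
      rw [pp a (m+j) i, show (m+j) + i = 2*m by omega, pow_card_GF hk a]
      rw [pp s (m+j) i, show (m+j) + i = 2*m by omega, pow_card_GF hk s]
      rw [pp s i i, show i + i = 2*i by ring, ← hA]
    rw [hLm, hLi]
    simp only [hg, Polynomial.eval_add, Polynomial.eval_mul, Polynomial.eval_C,
      Polynomial.eval_pow, Polynomial.eval_X]
    linear_combination (-(A^(2^i) * a^(2^m) * s^(2^(m+i)))) * htwo (2*m)
  have hsub : (Finset.univ.filter (fun s : GF (2*m) => Lam m i j a s = 0))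
      ⊆ (Finset.univ.filter (fun s : GF (2*m) => g.eval s = 0)) := by
    intro s hs
    have h0 := (Finset.mem_filter.mp hs).2
    refine Finset.mem_filter.mpr ⟨Finset.mem_univ _, ?_⟩
    rw [heval s, h0]
    simp
  have hgne : g ≠ 0 := by
    intro h0
    have hc : g.coeff (2^(2*i)) = a^(2^m) * a^(2^i) := by
      rw [hg]
      rw [Polynomial.coeff_add, Polynomial.coeff_add]
      rw [Polynomial.coeff_C_mul, Polynomial.coeff_C_mul, Polynomial.coeff_C_mul]
      rw [Polynomial.coeff_X_pow, Polynomial.coeff_X_pow, Polynomial.coeff_X]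
      have h1 : ¬ (2^(2*i) = 2^j) := by
        intro h
        have := Nat.pow_right_injective (le_refl 2) h
        omega
      have h2 : ¬ ((1:ℕ) = 2^(2*i)) := by
        have : (2:ℕ)^1 ≤ 2^(2*i) := Nat.pow_le_pow_right (by norm_num) (by omega)
        omega
      simp [h1, h2]
    rw [h0] at hc
    simp only [Polynomial.coeff_zero] at hc
    exact mul_ne_zero (pow_ne_zero _ ha) (pow_ne_zero _ ha) hc.symm
  have hdeg : g.natDegree ≤ 2^m := by
    rw [hg]
    refine le_trans (Polynomial.natDegree_add_le _ _) ?_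
    rw [max_le_iff]
    constructor
    · refine le_trans (Polynomial.natDegree_add_le _ _) ?_
      rw [max_le_iff]
      constructor
      · refine le_trans (Polynomial.natDegree_C_mul_le _ _) ?_
        rw [Polynomial.natDegree_X_pow]
        exact Nat.pow_le_pow_right (by norm_num) (by omega)
      · refine le_trans (Polynomial.natDegree_C_mul_le _ _) ?_
        rw [Polynomial.natDegree_X_pow]
        exact Nat.pow_le_pow_right (by norm_num) (by omega)
    · refine le_trans (Polynomial.natDegree_C_mul_le _ _) ?_
      refine le_trans (Polynomial.natDegree_X_le) ?_
      exact Nat.one_le_two_pow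
  calc kk m i a
      = (Finset.univ.filter (fun s : GF (2*m) => Lam m i j a s = 0)).card :=
        kk_eq_Lam hm hij a
    _ ≤ (Finset.univ.filter (fun s : GF (2*m) => g.eval s = 0)).card :=
        Finset.card_le_card hsub
    _ ≤ g.natDegree := card_roots_le hk g hgne
    _ ≤ 2^m := hdeg

lemma kk_le (hm : m ≠ 0) (hi1 : 1 ≤ i) (hij : i + j = m) (hj : j ≠ 0) (h3 : m ≠ 3*i)
    {a : GF (2*m)} (ha : a ≠ 0) : kk m i a ≤ 2^m := by
  rcases le_or_gt m (2*i) with hc | hc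
  · exact kk_le_case1 hm hij hj (by omega) ha
  · exact kk_le_case2 hm hi1 hij h3 hc ha

end Aux15

namespace Aux15

lemma m_ne_3i {m i : ℕ} (hi1 : 1 ≤ i) (hv : padicValNat 2 i < padicValNat 2 m) :
    m ≠ 3 * i := by
  intro h
  have hi0 : i ≠ 0 := by omega
  have h3 : padicValNat 2 3 = 0 := padicValNat.eq_zero_of_not_dvd (by norm_num)
  have := padicValNat.mul (p := 2) (a := 3) (b := i) (by norm_num) hi0
  rw [← h, h3, zero_add] at this
  omega

theorem main (m : ℕ) (i : ℕ) (hi1 : 1 ≤ i) (hi2 : i ≤ m - 1)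
    (hv : padicValNat 2 i < padicValNat 2 m) :
    (Finset.univ.filter (fun a : GF (2*m) => a ≠ 0 ∧
        ∀ ω : GF (2*m),
          (walsh (2*m)
            (fun x => atr (2*m) (a * (x ^ (2 ^ m + 1) + x ^ (2 ^ i + 1)))) ω) ^ 2
            = 2 ^ (2*m))).card
      ≠ 2 ^ (2*m) - 2 ^ m := by
  intro hcard
  have hm2 : 2 ≤ m := by
    rcases Nat.lt_or_ge m 2 with h | h
    · interval_cases m <;> omega
    · exact h
  have hm : m ≠ 0 := by omega
  have hk : 2*m ≠ 0 := by omega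
  have hij : i + (m - i) = m := by omega
  have hj : m - i ≠ 0 := by omega
  have h3 := m_ne_3i hi1 hv
  set S : Finset (GF (2*m)) := Finset.univ.filter (fun a : GF (2*m) => a ≠ 0 ∧
      ∀ ω : GF (2*m),
        (walsh (2*m)
          (fun x => atr (2*m) (a * (x ^ (2 ^ m + 1) + x ^ (2 ^ i + 1)))) ω) ^ 2
          = 2 ^ (2*m)) with hS
  set T : Finset (GF (2*m)) := Finset.univ.erase (0 : GF (2*m)) with hT
  have hTcard : T.card = 2^(2*m) - 1 := by
    rw [hT, Finset.card_erase_of_mem (Finset.mem_univ _), Finset.card_univ, card_GF hk]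
  have hSsub : S ⊆ T := by
    intro a haS
    have := (Finset.mem_filter.mp haS).2.1
    exact Finset.mem_erase.mpr ⟨this, Finset.mem_univ _⟩
  have hsum1 : kk m i 0 + ∑ a ∈ T, kk m i a = ∑ a : GF (2*m), kk m i a :=
    Finset.add_sum_erase _ _ (Finset.mem_univ _)
  have hsum2 : ∑ a ∈ T \ S, kk m i a + ∑ a ∈ S, kk m i a = ∑ a ∈ T, kk m i a :=
    Finset.sum_sdiff hSsub
  have hSone : ∑ a ∈ S, kk m i a = S.card := by
    rw [Finset.sum_congr rfl (fun a haS => kk_eq_one hm a (Finset.mem_filter.mp haS).2.2)]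
    simp
  have hrest : ∑ a ∈ T \ S, kk m i a ≤ (T \ S).card * 2^m := by
    calc ∑ a ∈ T \ S, kk m i a ≤ ∑ _a ∈ T \ S, 2^m := by
          refine Finset.sum_le_sum fun a haTS => ?_
          have haT := (Finset.mem_sdiff.mp haTS).1
          have ha0 : a ≠ 0 := (Finset.mem_erase.mp haT).1
          exact kk_le hm hi1 hij hj h3 ha0
      _ = (T \ S).card * 2^m := by rw [Finset.sum_const, smul_eq_mul]
  have hKK := KK_lower (i := i) hm
  have hsumkk := sum_kk (i := i) hm
  have hkk0 := kk_zero (i := i) hm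
  have hTS : (T \ S).card = T.card - S.card := Finset.card_sdiff_of_subset hSsub
  set M : ℕ := 2^m with hM
  set MM : ℕ := 2^(2*m) with hMM'
  have hMM : MM = M * M := by rw [hMM', hM, two_mul, pow_add]
  have hM2 : 2 ≤ M := by
    rw [hM]
    calc 2 = 2^1 := by norm_num
    _ ≤ 2^m := Nat.pow_le_pow_right (by norm_num) (by omega)
  have hprod : (M - 1) * M = MM - M := by
    rw [hMM, Nat.sub_mul, one_mul]
  have hMleMM : M ≤ MM := by
    rw [hMM]
    calc M = M * 1 := by ring
    _ ≤ M * M := Nat.mul_le_mul_left _ (by omega)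
  -- assemble the contradiction
  have hScard : S.card = MM - M := hcard
  have hTScard : (T \ S).card = M - 1 := by omega
  have hrest2 : ∑ a ∈ T \ S, kk m i a ≤ MM - M := by
    calc ∑ a ∈ T \ S, kk m i a ≤ (T \ S).card * 2^m := hrest
    _ = (M - 1) * M := by rw [hTScard, hM]
    _ = MM - M := hprod
  omega

end Aux15


/-- if `1 ≤ i ≤ m−1` and `v₂(i) < v₂(m)` then
`F(x) = x^(2^m+1) + x^(2^i+1)` does not have `2^n − 2^m` bent components. -/
theorem stmt15 (m : ℕ) (i : ℕ) (hi1 : 1 ≤ i) (hi2 : i ≤ m - 1)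
    (hv : padicValNat 2 i < padicValNat 2 m) :
    (Finset.univ.filter (fun a : GF (2*m) => a ≠ 0 ∧
        ∀ ω : GF (2*m),
          (walsh (2*m)
            (fun x => atr (2*m) (a * (x ^ (2 ^ m + 1) + x ^ (2 ^ i + 1)))) ω) ^ 2
            = 2 ^ (2*m))).card
      ≠ 2 ^ (2*m) - 2 ^ m := by
  exact Aux15.main m i hi1 hi2 hv
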